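/- arXiv:1608.06067 — 6 statements merged into one kernel-verified Lean document; each statement's English description precedes it below -/
import Mathlib

section
/- Let R > 0 and let f_R : ℝ² → ℝ be the uniform density on the closed disk of radius R centered at the origin, i.e. f_R(x) = 1/(πR²) if |x| ≤ R and f_R(x) = 0 otherwise. Then for every v ∈ ℝ², the convolution satisfies (f_R ⋆ f_R)(v) = ∫_{ℝ²} f_R(x) f_R(v − x) dx = A_R(|v|)/(π² R⁴). (This identity is step (e) in the proof of Lemma 3 for the SOCP second moment density.) -/
open MeasureTheory Real

/-- The lens-area function `A_R(r)`. -/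
noncomputable def lensArea (R r : ℝ) : ℝ :=
  if r ≤ 2 * R then 2 * R ^ 2 * Real.arccos (r / (2 * R)) - r * Real.sqrt (R ^ 2 - r ^ 2 / 4)
  else 0

/-- Uniform density on the closed disk of radius `R` centered at the origin in `ℝ²`. -/
noncomputable def diskDensity (R : ℝ) (x : EuclideanSpace ℝ (Fin 2)) : ℝ :=
  if ‖x‖ ≤ R then 1 / (π * R ^ 2) else 0

open intervalIntegral in

lemma sqrt_integral (R a : ℝ) (hR : 0 < R) (ha0 : 0 ≤ a) (haR : a ≤ R) :
    ∫ t in a..R, Real.sqrt (R ^ 2 - t ^ 2)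
      = R ^ 2 / 2 * Real.arccos (a / R) - a / 2 * Real.sqrt (R ^ 2 - a ^ 2) := by
  set F : ℝ → ℝ := fun t => t / 2 * Real.sqrt (R ^ 2 - t ^ 2) + R ^ 2 / 2 * Real.arcsin (t / R)
    with hF
  have key : ∫ t in a..R, Real.sqrt (R ^ 2 - t ^ 2) = F R - F a := by
    apply intervalIntegral.integral_eq_sub_of_hasDeriv_right_of_le haR
    · apply ContinuousOn.add
      · exact (continuousOn_id.div_const 2).mul
          ((continuous_const.sub (continuous_pow 2)).continuousOn.sqrt)
      · exact continuousOn_const.mul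
          ((Real.continuous_arcsin.comp (continuous_id.div_const R)).continuousOn)
    · intro t ht
      have htR : t < R := ht.2
      have ht0 : 0 ≤ t := le_trans ha0 ht.1.le
      have hpos : 0 < R ^ 2 - t ^ 2 := by nlinarith
      have hs : 0 < Real.sqrt (R ^ 2 - t ^ 2) := Real.sqrt_pos.2 hpos
      have h1 : HasDerivAt (fun t : ℝ => R ^ 2 - t ^ 2) (-(2 * t)) t := by
        simpa using ((hasDerivAt_pow 2 t).const_sub (R ^ 2))
      have hsqrt : HasDerivAt (fun t : ℝ => Real.sqrt (R ^ 2 - t ^ 2))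
          (-(2 * t) / (2 * Real.sqrt (R ^ 2 - t ^ 2))) t := h1.sqrt hpos.ne'
      have hne1 : t / R ≠ 1 := by
        intro h; rw [div_eq_one_iff_eq hR.ne'] at h; exact htR.ne h
      have hnem1 : t / R ≠ -1 := by
        intro h
        have : (0:ℝ) ≤ t / R := div_nonneg ht0 hR.le
        linarith [this.trans_eq h]
      have harcsin0 : HasDerivAt Real.arcsin (1 / Real.sqrt (1 - (t/R) ^ 2)) (t / R) :=
        Real.hasDerivAt_arcsin hnem1 hne1
      have harcsin : HasDerivAt (fun t : ℝ => Real.arcsin (t / R))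
          (1 / Real.sqrt (1 - (t / R) ^ 2) * (1 / R)) t :=
        by have := harcsin0.comp t ((hasDerivAt_id t).div_const R); exact this
      have hsqrt_eq : Real.sqrt (1 - (t / R) ^ 2) = Real.sqrt (R ^ 2 - t ^ 2) / R := by
        have : 1 - (t / R) ^ 2 = (R ^ 2 - t ^ 2) / R ^ 2 := by
          field_simp
        rw [this, Real.sqrt_div hpos.le, Real.sqrt_sq hR.le]
      have hFd : HasDerivAt F
          (1 / 2 * Real.sqrt (R ^ 2 - t ^ 2) + t / 2 * (-(2 * t) / (2 * Real.sqrt (R ^ 2 - t ^ 2)))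
            + R ^ 2 / 2 * (1 / Real.sqrt (1 - (t / R) ^ 2) * (1 / R))) t := by
        exact (((hasDerivAt_id t).div_const 2).mul hsqrt).add (harcsin.const_mul _)
      have : (1 / 2 * Real.sqrt (R ^ 2 - t ^ 2) + t / 2 * (-(2 * t) / (2 * Real.sqrt (R ^ 2 - t ^ 2)))
            + R ^ 2 / 2 * (1 / Real.sqrt (1 - (t / R) ^ 2) * (1 / R)))
          = Real.sqrt (R ^ 2 - t ^ 2) := by
        rw [hsqrt_eq]
        have hs2 : Real.sqrt (R ^ 2 - t ^ 2) ^ 2 = R ^ 2 - t ^ 2 := Real.sq_sqrt hpos.le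
        field_simp
        linear_combination (-1) * hs2
      exact (this ▸ hFd).hasDerivWithinAt
    · apply ContinuousOn.intervalIntegrable
      exact ((continuous_const.sub (continuous_pow 2)).continuousOn.sqrt)
  rw [key, hF]
  have h1 : Real.sqrt (R ^ 2 - R ^ 2) = 0 := by simp
  have h2 : Real.arcsin (R / R) = π / 2 := by rw [div_self hR.ne', Real.arcsin_one]
  have h3 : Real.arccos (a / R) = π / 2 - Real.arcsin (a / R) := Real.arccos_eq_pi_div_two_sub_arcsin _
  simp only [h1, h2, h3]
  ring

lemma lens_integral (R d : ℝ) (hR : 0 < R) (hd0 : 0 ≤ d) (hd : d ≤ 2 * R) :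
    ∫ x : ℝ, 2 * Real.sqrt (min (R ^ 2 - x ^ 2) (R ^ 2 - (x - d) ^ 2)) = lensArea R d := by
  set g : ℝ → ℝ := fun x => 2 * Real.sqrt (min (R ^ 2 - x ^ 2) (R ^ 2 - (x - d) ^ 2)) with hg
  have hcont : Continuous g := by
    apply continuous_const.mul
    apply Real.continuous_sqrt.comp
    exact ((continuous_const.sub (continuous_pow 2)).min
      (continuous_const.sub ((continuous_id.sub continuous_const).pow 2)))
  have hsupp : ∀ x ∉ Set.Icc (d - R) R, g x = 0 := by
    intro x hx
    simp only [Set.mem_Icc, not_and_or, not_le] at hx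
    have : min (R ^ 2 - x ^ 2) (R ^ 2 - (x - d) ^ 2) ≤ 0 := by
      rcases hx with h | h
      · exact le_trans (min_le_right _ _) (by nlinarith)
      · exact le_trans (min_le_left _ _) (by nlinarith)
    rw [hg]
    simp only
    rw [Real.sqrt_eq_zero_of_nonpos this, mul_zero]
  have hle1 : d - R ≤ d / 2 := by linarith
  have hle2 : d / 2 ≤ R := by linarith
  have step1 : ∫ x : ℝ, g x = ∫ x in (d - R)..R, g x := by
    rw [intervalIntegral.integral_of_le (by linarith), ← integral_Icc_eq_integral_Ioc]
    exact (setIntegral_eq_integral_of_forall_compl_eq_zero hsupp).symm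
  have hInt : ∀ a b : ℝ, IntervalIntegrable g volume a b := fun a b =>
    hcont.intervalIntegrable a b
  have step2 : ∫ x in (d - R)..R, g x
      = (∫ x in (d - R)..(d / 2), g x) + ∫ x in (d / 2)..R, g x :=
    (intervalIntegral.integral_add_adjacent_intervals (hInt _ _) (hInt _ _)).symm
  have hright : ∫ x in (d / 2)..R, g x = ∫ x in (d / 2)..R, 2 * Real.sqrt (R ^ 2 - x ^ 2) := by
    apply intervalIntegral.integral_congr
    intro x hx
    rw [Set.uIcc_of_le (by linarith)] at hx
    have h1 : (x - d) ^ 2 ≤ x ^ 2 := by nlinarith [hx.1, hx.2]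
    rw [hg]
    simp only
    rw [min_eq_left (by linarith)]
  have hleft : ∫ x in (d - R)..(d / 2), g x
      = ∫ x in (d / 2)..R, 2 * Real.sqrt (R ^ 2 - x ^ 2) := by
    have : ∫ x in (d - R)..(d / 2), g x
        = ∫ x in (d - R)..(d / 2), 2 * Real.sqrt (R ^ 2 - (d - x) ^ 2) := by
      apply intervalIntegral.integral_congr
      intro x hx
      rw [Set.uIcc_of_le (by linarith)] at hx
      have h1 : x ^ 2 ≤ (x - d) ^ 2 := by nlinarith [hx.1, hx.2]
      rw [hg]
      simp only
      rw [min_eq_right (by linarith), show (x - d) ^ 2 = (d - x) ^ 2 by ring]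
    rw [this]
    have := intervalIntegral.integral_comp_sub_left
      (a := d - R) (b := d / 2) (fun u => 2 * Real.sqrt (R ^ 2 - u ^ 2)) d
    rw [this, show d - d / 2 = d / 2 by ring, show d - (d - R) = R by ring]
  have hval : ∫ x in (d / 2)..R, 2 * Real.sqrt (R ^ 2 - x ^ 2)
      = R ^ 2 * Real.arccos (d / (2 * R)) - d / 2 * Real.sqrt (R ^ 2 - (d / 2) ^ 2) := by
    rw [intervalIntegral.integral_const_mul, sqrt_integral R (d / 2) hR (by linarith) hle2]
    have : d / 2 / R = d / (2 * R) := by ring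
    rw [this]; ring
  rw [step1, step2, hright, hleft, hval, lensArea, if_pos hd]
  have : (d / 2) ^ 2 = d ^ 2 / 4 := by ring
  rw [this]; ring

lemma lens_volume (R d : ℝ) (hR : 0 < R) (hd0 : 0 ≤ d) (hd : d ≤ 2 * R) :
    volume {p : ℝ × ℝ | p.1 ^ 2 + p.2 ^ 2 ≤ R ^ 2 ∧ (p.1 - d) ^ 2 + p.2 ^ 2 ≤ R ^ 2}
      = ENNReal.ofReal (lensArea R d) := by
  set T : Set (ℝ × ℝ) :=
    {p : ℝ × ℝ | p.1 ^ 2 + p.2 ^ 2 ≤ R ^ 2 ∧ (p.1 - d) ^ 2 + p.2 ^ 2 ≤ R ^ 2} with hT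
  set g : ℝ → ℝ := fun x => 2 * Real.sqrt (min (R ^ 2 - x ^ 2) (R ^ 2 - (x - d) ^ 2)) with hg
  have hTmeas : MeasurableSet T := by
    apply MeasurableSet.inter
    · exact measurableSet_le ((measurable_fst.pow_const 2).add (measurable_snd.pow_const 2))
        measurable_const
    · exact measurableSet_le (((measurable_fst.sub measurable_const).pow_const 2).add
        (measurable_snd.pow_const 2)) measurable_const
  have hslice : ∀ x : ℝ, volume (Prod.mk x ⁻¹' T) = ENNReal.ofReal (g x) := by
    intro x
    have hpre : Prod.mk x ⁻¹' T
        = {y : ℝ | y ^ 2 ≤ min (R ^ 2 - x ^ 2) (R ^ 2 - (x - d) ^ 2)} := by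
      ext y
      simp only [hT, Set.mem_preimage, Set.mem_setOf_eq, le_min_iff]
      constructor <;> intro h <;> exact ⟨by linarith [h.1], by linarith [h.2]⟩
    rw [hpre]
    set m := min (R ^ 2 - x ^ 2) (R ^ 2 - (x - d) ^ 2) with hm
    rcases le_or_gt 0 m with h | h
    · have : {y : ℝ | y ^ 2 ≤ m} = Set.Icc (-Real.sqrt m) (Real.sqrt m) := by
        ext y
        simp only [Set.mem_setOf_eq, Set.mem_Icc, ← abs_le]
        rw [← Real.sqrt_sq_eq_abs, Real.sqrt_le_sqrt_iff h]
      rw [this, Real.volume_Icc, hg]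
      congr 1
      have := Real.sqrt_nonneg m
      ring
    · have h1 : {y : ℝ | y ^ 2 ≤ m} = ∅ := by
        ext y
        simp only [Set.mem_setOf_eq, Set.mem_empty_iff_false, iff_false, not_le]
        exact lt_of_lt_of_le h (sq_nonneg y)
      rw [h1, measure_empty, hg]
      simp only
      rw [Real.sqrt_eq_zero_of_nonpos h.le, mul_zero, ENNReal.ofReal_zero]
  have hcont : Continuous g := by
    apply continuous_const.mul
    apply Real.continuous_sqrt.comp
    exact ((continuous_const.sub (continuous_pow 2)).min
      (continuous_const.sub ((continuous_id.sub continuous_const).pow 2)))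
  have hsupp : ∀ x ∉ Set.Icc (d - R) R, g x = 0 := by
    intro x hx
    simp only [Set.mem_Icc, not_and_or, not_le] at hx
    have : min (R ^ 2 - x ^ 2) (R ^ 2 - (x - d) ^ 2) ≤ 0 := by
      rcases hx with h | h
      · exact le_trans (min_le_right _ _) (by nlinarith)
      · exact le_trans (min_le_left _ _) (by nlinarith)
    rw [hg]
    simp only
    rw [Real.sqrt_eq_zero_of_nonpos this, mul_zero]
  have hint : Integrable g := by
    apply hcont.integrable_of_hasCompactSupport
    exact HasCompactSupport.intro isCompact_Icc hsupp
  have hnonneg : 0 ≤ᵐ[volume] g := by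
    filter_upwards with x
    rw [hg]; positivity
  calc volume T = ∫⁻ x : ℝ, volume (Prod.mk x ⁻¹' T) := by
        rw [MeasureTheory.Measure.volume_eq_prod, Measure.prod_apply hTmeas]
    _ = ∫⁻ x : ℝ, ENNReal.ofReal (g x) := by
        congr 1; ext x; exact hslice x
    _ = ENNReal.ofReal (∫ x : ℝ, g x) :=
        (MeasureTheory.ofReal_integral_eq_lintegral_ofReal hint hnonneg).symm
    _ = ENNReal.ofReal (lensArea R d) := by rw [← lens_integral R d hR hd0 hd]

lemma lensArea_nonneg (R d : ℝ) (hR : 0 < R) (hd0 : 0 ≤ d) (hd : d ≤ 2 * R) :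
    0 ≤ lensArea R d := by
  rw [← lens_integral R d hR hd0 hd]
  apply integral_nonneg
  intro x
  positivity


theorem stmt1 (R : ℝ) (hR : 0 < R) (v : EuclideanSpace ℝ (Fin 2)) :
    (∫ x : EuclideanSpace ℝ (Fin 2), diskDensity R x * diskDensity R (v - x))
      = lensArea R ‖v‖ / (π ^ 2 * R ^ 4) := by
  have hπ : (0:ℝ) < π := Real.pi_pos
  set d := ‖v‖ with hd
  have hd0 : 0 ≤ d := norm_nonneg v
  rcases le_or_gt d (2 * R) with hd2R | hd2R
  swap
  · have hzero : ∀ x : EuclideanSpace ℝ (Fin 2),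
        diskDensity R x * diskDensity R (v - x) = 0 := by
      intro x
      rw [diskDensity, diskDensity]
      split_ifs with h1 h2
      · exfalso
        have hvx : x + (v - x) = v := by abel
        have : ‖v‖ ≤ ‖x‖ + ‖v - x‖ := by
          calc ‖v‖ = ‖x + (v - x)‖ := by rw [hvx]
          _ ≤ ‖x‖ + ‖v - x‖ := norm_add_le _ _
        linarith
      all_goals ring
    simp only [hzero, integral_zero, lensArea, if_neg (not_le.2 hd2R), zero_div]
  · set S : Set (EuclideanSpace ℝ (Fin 2)) :=
      {x : EuclideanSpace ℝ (Fin 2) | ‖x‖ ≤ R ∧ ‖v - x‖ ≤ R} with hS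
    have hSmeas : MeasurableSet S := by
      apply MeasurableSet.inter
      · exact measurableSet_le continuous_norm.measurable measurable_const
      · exact measurableSet_le (continuous_norm.comp
          (continuous_const.sub continuous_id)).measurable measurable_const
    have hind : (fun x : EuclideanSpace ℝ (Fin 2) =>
          diskDensity R x * diskDensity R (v - x))
        = S.indicator (fun _ => (1 / (π * R ^ 2)) ^ 2) := by
      funext x
      rw [Set.indicator_apply, diskDensity, diskDensity]
      by_cases h1 : ‖x‖ ≤ R <;> by_cases h2 : ‖v - x‖ ≤ R <;>
        simp [hS, h1, h2, Set.mem_setOf_eq, sq]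
    set w : EuclideanSpace ℝ (Fin 2) :=
      (d : ℝ) • (EuclideanSpace.single (0 : Fin 2) (1:ℝ)) with hw
    have hwnorm : ‖w‖ = d := by
      rw [hw, norm_smul, EuclideanSpace.norm_single, norm_one, mul_one,
        Real.norm_eq_abs, abs_of_nonneg hd0]
    have hvw : ‖w‖ = ‖v‖ := by rw [hwnorm, hd]
    set f := Submodule.reflection (𝕜 := ℝ) (ℝ ∙ (w - v))ᗮ with hf
    have hfw : f w = v := Submodule.reflection_sub hvw
    have hpre : f ⁻¹' S = {x : EuclideanSpace ℝ (Fin 2) | ‖x‖ ≤ R ∧ ‖w - x‖ ≤ R} := by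
      ext x
      simp only [Set.mem_preimage, hS, Set.mem_setOf_eq]
      have hnx : ‖(f : EuclideanSpace ℝ (Fin 2) ≃ₗᵢ[ℝ] _) x‖ = ‖x‖ := f.norm_map x
      have hvfx : ‖v - f x‖ = ‖w - x‖ := by
        rw [← hfw, ← map_sub, f.norm_map]
      rw [hnx, hvfx]
    have hvolS : volume S
        = volume {x : EuclideanSpace ℝ (Fin 2) | ‖x‖ ≤ R ∧ ‖w - x‖ ≤ R} := by
      rw [← hpre]
      exact (f.measurePreserving.measure_preimage hSmeas.nullMeasurableSet).symm
    set T : Set (ℝ × ℝ) :=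
      {p : ℝ × ℝ | p.1 ^ 2 + p.2 ^ 2 ≤ R ^ 2 ∧ (p.1 - d) ^ 2 + p.2 ^ 2 ≤ R ^ 2} with hT
    have hTmeas : MeasurableSet T := by
      apply MeasurableSet.inter
      · exact measurableSet_le ((measurable_fst.pow_const 2).add (measurable_snd.pow_const 2))
          measurable_const
      · exact measurableSet_le (((measurable_fst.sub measurable_const).pow_const 2).add
          (measurable_snd.pow_const 2)) measurable_const
    have hmp : MeasurePreserving
        (fun x : EuclideanSpace ℝ (Fin 2) => (x 0, x 1)) volume volume := by
      have h1 := EuclideanSpace.volume_preserving_symm_measurableEquiv_toLp (Fin 2)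
      have h2 := volume_preserving_finTwoArrow ℝ
      exact h2.comp h1
    have hnorm_iff : ∀ x : EuclideanSpace ℝ (Fin 2),
        ‖x‖ ≤ R ↔ (x 0) ^ 2 + (x 1) ^ 2 ≤ R ^ 2 := by
      intro x
      rw [EuclideanSpace.norm_eq, Real.sqrt_le_iff]
      simp only [Fin.sum_univ_two, Real.norm_eq_abs, sq_abs]
      exact ⟨fun h => h.2, fun h => ⟨hR.le, h⟩⟩
    have hSw : {x : EuclideanSpace ℝ (Fin 2) | ‖x‖ ≤ R ∧ ‖w - x‖ ≤ R}
        = (fun x : EuclideanSpace ℝ (Fin 2) => (x 0, x 1)) ⁻¹' T := by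
      ext x
      simp only [Set.mem_setOf_eq, Set.mem_preimage, hT]
      have hw0 : (w - x) 0 = d - x 0 := by
        simp [hw, EuclideanSpace.single_apply]
      have hw1 : (w - x) 1 = -(x 1) := by
        simp [hw, EuclideanSpace.single_apply]
      rw [hnorm_iff x, hnorm_iff (w - x), hw0, hw1]
      constructor
      · rintro ⟨hA, hB⟩
        exact ⟨hA, by nlinarith [hB]⟩
      · rintro ⟨hA, hB⟩
        exact ⟨hA, by nlinarith [hB]⟩
    have hvolT : volume S = ENNReal.ofReal (lensArea R d) := by
      rw [hvolS, hSw, hmp.measure_preimage hTmeas.nullMeasurableSet,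
        lens_volume R d hR hd0 hd2R]
    rw [hind, integral_indicator_const _ hSmeas, measureReal_def, hvolT,
      ENNReal.toReal_ofReal (lensArea_nonneg R d hR hd0 hd2R)]
    rw [smul_eq_mul, show (1 / (π * R ^ 2)) ^ 2 = 1 / (π ^ 2 * R ^ 4) by
      field_simp, mul_one_div]
end

section
/- For every R > 0 and every r with 0 ≤ r ≤ 2R, one has πR² − A_R(r) ≤ (π/2 + 1)·R·r. Consequently, for every fixed r ≥ 0, A_R(r)/(πR²) → 1 as R → ∞. (This quantitative approximation A_R(|x−y|) ≈ πR² for large R is step (a) in the proof of Lemma 2.) -/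
open Real Filter

lemma lensArea_bound (R r : ℝ) (hR : 0 < R) (hr : 0 ≤ r) (hr2 : r ≤ 2 * R) :
    π * R ^ 2 - lensArea R r ≤ (π / 2 + 1) * R * r := by
  rw [lensArea, if_pos hr2]
  set x := r / (2 * R) with hx
  have hx0 : 0 ≤ x := by positivity
  have hx1 : x ≤ 1 := by
    rw [hx, div_le_one (by linarith)]; exact hr2
  have harcsin_nonneg : 0 ≤ Real.arcsin x := Real.arcsin_nonneg.2 hx0
  have harcsin_le : Real.arcsin x ≤ π / 2 := Real.arcsin_le_pi_div_two x
  have hjordan : 2 / π * Real.arcsin x ≤ x := by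
    have := Real.mul_le_sin harcsin_nonneg harcsin_le
    rwa [Real.sin_arcsin (by linarith) hx1] at this
  have hpi : 0 < π := Real.pi_pos
  have harcsin : Real.arcsin x ≤ π / 2 * x := by
    have h := mul_le_mul_of_nonneg_left hjordan (le_of_lt (by positivity : (0:ℝ) < π / 2))
    calc Real.arcsin x = π / 2 * (2 / π * Real.arcsin x) := by field_simp
      _ ≤ π / 2 * x := h
  have harccos : π / 2 - π / 2 * x ≤ Real.arccos x := by
    rw [Real.arccos_eq_pi_div_two_sub_arcsin]; linarith
  have hsqrt : Real.sqrt (R ^ 2 - r ^ 2 / 4) ≤ R := by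
    calc Real.sqrt (R ^ 2 - r ^ 2 / 4) ≤ Real.sqrt (R ^ 2) :=
          Real.sqrt_le_sqrt (by nlinarith)
      _ = R := Real.sqrt_sq hR.le
  have hxr : π / 2 * x * (2 * R ^ 2) = π / 2 * R * r := by
    rw [hx]; field_simp
  nlinarith [mul_le_mul_of_nonneg_left harccos (le_of_lt (by positivity : (0:ℝ) < 2 * R ^ 2)),
    mul_le_mul_of_nonneg_left hsqrt hr]

theorem stmt3 :
    (∀ R r : ℝ, 0 < R → 0 ≤ r → r ≤ 2 * R →
      π * R ^ 2 - lensArea R r ≤ (π / 2 + 1) * R * r) ∧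
    (∀ r : ℝ, 0 ≤ r →
      Tendsto (fun R : ℝ => lensArea R r / (π * R ^ 2)) atTop (nhds 1)) := by
  have hpi : 0 < π := Real.pi_pos
  refine ⟨lensArea_bound, fun r hr => ?_⟩
  have hlow : Tendsto (fun R : ℝ => 1 - (π / 2 + 1) * r / π / R) atTop (nhds 1) := by
    have : Tendsto (fun R : ℝ => (π / 2 + 1) * r / π / R) atTop (nhds 0) :=
      tendsto_const_nhds.div_atTop tendsto_id
    simpa using tendsto_const_nhds.sub this
  refine tendsto_of_tendsto_of_tendsto_of_le_of_le' hlow tendsto_const_nhds ?_ ?_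
  · filter_upwards [Filter.eventually_ge_atTop (max 1 r)] with R hR
    have hR1 : (1:ℝ) ≤ R := le_trans (le_max_left _ _) hR
    have hR0 : 0 < R := lt_of_lt_of_le one_pos hR1
    have hr2 : r ≤ 2 * R := le_trans (le_trans (le_max_right _ _) hR) (by linarith)
    have hb := lensArea_bound R r hR0 hr hr2
    rw [le_div_iff₀ (by positivity : (0:ℝ) < π * R ^ 2)]
    have key : (1 - (π / 2 + 1) * r / π / R) * (π * R ^ 2)
        = π * R ^ 2 - (π / 2 + 1) * R * r := by
      field_simp
    rw [key]; linarith
  · filter_upwards [Filter.eventually_ge_atTop (max 1 r)] with R hR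
    have hR1 : (1:ℝ) ≤ R := le_trans (le_max_left _ _) hR
    have hR0 : 0 < R := lt_of_lt_of_le one_pos hR1
    have hr2 : r ≤ 2 * R := le_trans (le_trans (le_max_right _ _) hR) (by linarith)
    have hA : lensArea R r ≤ π * R ^ 2 := by
      rw [lensArea, if_pos hr2]
      have h1 : Real.arccos (r / (2 * R)) ≤ π / 2 := by
        rw [Real.arccos_eq_pi_div_two_sub_arcsin]
        have := Real.arcsin_nonneg.2 (by positivity : (0:ℝ) ≤ r / (2 * R))
        linarith
      have h2 : 0 ≤ r * Real.sqrt (R ^ 2 - r ^ 2 / 4) := by positivity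
      nlinarith [sq_nonneg R]
    rw [div_le_one (by positivity)]
    exact hA
end

section
/- For every real α > 2 and every ε > 0, the function g_ε(x) = 1/(ε + |x|^α) on ℝ² is Lebesgue integrable and ∫_{ℝ²} g_ε(x) dx = (2π²/α)·ε^{(2−α)/α}·csc(2π/α). (This evaluates the planar integral ∫ g_ε appearing in the mean interference of Lemma 1 and in Lemma 2.) -/
open MeasureTheory Real

/-- The regularized path-loss function `g_ε(x) = 1/(ε + |x|^α)` on `ℝ²`. -/
noncomputable def gE (ε α : ℝ) (x : EuclideanSpace ℝ (Fin 2)) : ℝ :=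
  1 / (ε + ‖x‖ ^ α)

section aux
open Set intervalIntegral

lemma beta_real {s : ℝ} (h0 : 0 < s) (h1 : s < 1) :
    ∫ x in (0:ℝ)..1, x ^ (s-1) * (1-x) ^ (-s) = π / Real.sin (π * s) := by
  have hc : Complex.betaIntegral s (1 - s) = ↑(π / Real.sin (π * s)) := by
    have h2 : Complex.Gamma s * Complex.Gamma (1 - s)
        = Complex.Gamma (s + (1-s)) * Complex.betaIntegral s (1-s) :=
      Complex.Gamma_mul_Gamma_eq_betaIntegral (by simpa using h0) (by simp [Complex.sub_re]; simpa using h1)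
    rw [Complex.Gamma_mul_Gamma_one_sub] at h2
    simp only [add_sub_cancel, Complex.Gamma_one, one_mul] at h2
    rw [← h2]
    push_cast [Complex.ofReal_div, Complex.ofReal_sin]
    ring
  have heq : Complex.betaIntegral s (1-s)
      = ↑(∫ x in (0:ℝ)..1, x ^ (s-1) * (1-x) ^ (-s)) := by
    rw [Complex.betaIntegral, ← intervalIntegral.integral_ofReal]
    apply intervalIntegral.integral_congr
    intro x hx
    rw [uIcc_of_le zero_le_one] at hx
    have hx0 : (0:ℝ) ≤ x := hx.1
    have hx1 : (0:ℝ) ≤ 1 - x := by linarith [hx.2]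
    have e1 : ((s:ℂ) - 1) = ((s - 1 : ℝ) : ℂ) := by push_cast; ring
    have e2 : (1 - (s:ℂ) - 1) = ((-s : ℝ) : ℂ) := by push_cast; ring
    have e3 : (1 - (x:ℂ)) = ((1 - x : ℝ) : ℂ) := by push_cast; ring
    simp only []
    rw [e1, e2, e3, ← Complex.ofReal_cpow hx0, ← Complex.ofReal_cpow hx1,
      ← Complex.ofReal_mul]
  rw [heq] at hc
  exact_mod_cast hc

lemma J_val {s : ℝ} (h0 : 0 < s) (h1 : s < 1) :
    ∫ x in Ioi (0:ℝ), x ^ (s-1) / (1 + x) = π / Real.sin (π * s) := by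
  have hderiv : ∀ t ∈ Ioo (0:ℝ) 1,
      HasDerivWithinAt (fun t => t / (1 - t)) (((1-t)^2)⁻¹) (Ioo 0 1) t := by
    intro t ht
    have h1t : (1:ℝ) - t ≠ 0 := ne_of_gt (by linarith [ht.2])
    have := (hasDerivAt_id t).div ((hasDerivAt_id t).const_sub 1) h1t
    exact (this.congr_deriv (by simp only [id]; rw [div_eq_mul_inv]; ring)).hasDerivWithinAt
  have hinj : InjOn (fun t : ℝ => t / (1 - t)) (Ioo 0 1) := by
    intro a ha b hb hab
    have ha1 : (1:ℝ) - a > 0 := by linarith [ha.2]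
    have hb1 : (1:ℝ) - b > 0 := by linarith [hb.2]
    field_simp at hab
    linarith
  have himg : (fun t : ℝ => t / (1 - t)) '' (Ioo 0 1) = Ioi 0 := by
    ext y; constructor
    · rintro ⟨t, ht, rfl⟩
      exact div_pos ht.1 (by linarith [ht.2])
    · intro hy
      refine ⟨y / (1 + y), ⟨div_pos hy (by linarith [mem_Ioi.mp hy]), ?_⟩, ?_⟩
      · rw [div_lt_one (by linarith [mem_Ioi.mp hy])]; linarith [mem_Ioi.mp hy]
      · have h1y : (1:ℝ) + y ≠ 0 := ne_of_gt (by linarith [mem_Ioi.mp hy])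
        field_simp
        ring
  have himage := integral_image_eq_integral_abs_deriv_smul measurableSet_Ioo hderiv hinj
    (fun x => x ^ (s-1) / (1 + x))
  rw [himg] at himage
  rw [himage]
  have hcong : ∀ t ∈ Ioo (0:ℝ) 1,
      |((1-t)^2)⁻¹| • ((t/(1-t)) ^ (s-1) / (1 + t/(1-t))) = t ^ (s-1) * (1-t) ^ (-s) := by
    intro t ht
    have ht0 : 0 < t := ht.1
    have ht1 : 0 < 1 - t := by linarith [ht.2]
    have h1 : 1 + t / (1-t) = (1-t)⁻¹ := by field_simp; ring
    rw [h1, smul_eq_mul, abs_of_pos (by positivity), Real.div_rpow ht0.le ht1.le,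
      div_eq_mul_inv _ ((1-t):ℝ)⁻¹, inv_inv, div_eq_mul_inv, ← Real.rpow_neg ht1.le,
      show ((1-t)^2)⁻¹ = (1-t)^(-2:ℝ) from by
        rw [← Real.rpow_natCast (1-t) 2, ← Real.rpow_neg ht1.le]; norm_num]
    calc (1-t)^(-2:ℝ) * (t^(s-1) * (1-t)^(-(s-1)) * (1-t))
        = t^(s-1) * ((1-t)^(-2:ℝ) * (1-t)^(-(s-1)) * (1-t)^(1:ℝ)) := by
          rw [Real.rpow_one]; ring
      _ = t^(s-1) * (1-t)^(-2 + -(s-1) + 1) := by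
          rw [← Real.rpow_add ht1, ← Real.rpow_add ht1]
      _ = t^(s-1) * (1-t)^(-s) := by rw [show (-2:ℝ) + -(s-1) + 1 = -s by ring]
  rw [setIntegral_congr_fun measurableSet_Ioo hcong]
  rw [← integral_Ioc_eq_integral_Ioo, ← intervalIntegral.integral_of_le zero_le_one]
  exact beta_real h0 h1

lemma K_val {α ε : ℝ} (hα : 2 < α) (hε : 0 < ε) :
    ∫ r in Ioi (0:ℝ), r / (ε + r ^ α) =
      α⁻¹ * ε ^ ((2-α)/α) * (π / Real.sin (π * (2/α))) := by
  have hα0 : (0:ℝ) < α := by linarith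
  set s : ℝ := 2/α with hs
  have h0 : 0 < s := by positivity
  have h1 : s < 1 := by rw [hs, div_lt_one hα0]; linarith
  have hs1 : s - 1 = (2-α)/α := by rw [hs]; field_simp
  -- step 1 : x = y^(1/α) substitution
  have step1 : ∫ r in Ioi (0:ℝ), r / (ε + r ^ α)
      = ∫ y in Ioi (0:ℝ), α⁻¹ * (y ^ (s-1) / (ε + y)) := by
    rw [← integral_comp_rpow_Ioi_of_pos (g := fun y => α⁻¹ * (y ^ (s-1) / (ε + y))) hα0]
    apply setIntegral_congr_fun measurableSet_Ioi
    intro x hx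
    have hx0 : (0:ℝ) < x := hx
    have e1 : (x ^ α) ^ (s - 1) = x ^ (2 - α) := by
      rw [← Real.rpow_mul hx0.le, show α * (s-1) = 2 - α by rw [hs]; field_simp]
    have e2 : x ^ (α-1) * x ^ (2-α) = x := by
      rw [← Real.rpow_add hx0, show α - 1 + (2 - α) = 1 by ring, Real.rpow_one]
    simp only [smul_eq_mul]
    rw [e1]
    calc x / (ε + x ^ α)
        = (α * α⁻¹) * ((x ^ (α-1) * x ^ (2-α)) / (ε + x ^ α)) := by
          rw [e2, mul_inv_cancel₀ hα0.ne', one_mul]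
      _ = α * x ^ (α-1) * (α⁻¹ * (x ^ (2-α) / (ε + x ^ α))) := by ring
  -- step 2 : y = ε * u substitution
  have step2 : ∫ y in Ioi (0:ℝ), y ^ (s-1) / (ε + y)
      = ε ^ (s-1) * ∫ u in Ioi (0:ℝ), u ^ (s-1) / (1 + u) := by
    have := integral_comp_mul_left_Ioi (fun y => y ^ (s-1) / (ε + y)) 0 hε
    rw [mul_zero] at this
    have congr2 : ∀ u ∈ Ioi (0:ℝ),
        (ε * u) ^ (s-1) / (ε + ε * u) = (ε ^ (s-1) * ε⁻¹) * (u ^ (s-1) / (1 + u)) := by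
      intro u hu
      have hu0 : (0:ℝ) < u := hu
      rw [Real.mul_rpow hε.le hu0.le, show ε + ε * u = ε * (1 + u) by ring]
      field_simp
    rw [setIntegral_congr_fun measurableSet_Ioi congr2,
      MeasureTheory.integral_const_mul] at this
    rw [smul_eq_mul] at this
    have h2 : ε⁻¹ * ∫ y in Ioi (0:ℝ), y ^ (s-1) / (ε + y)
        = ε ^ (s-1) * ε⁻¹ * ∫ u in Ioi (0:ℝ), u ^ (s-1) / (1 + u) := this.symm
    calc ∫ y in Ioi (0:ℝ), y ^ (s-1) / (ε + y)
        = ε * (ε⁻¹ * ∫ y in Ioi (0:ℝ), y ^ (s-1) / (ε + y)) := by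
          field_simp
      _ = ε * (ε ^ (s-1) * ε⁻¹ * ∫ u in Ioi (0:ℝ), u ^ (s-1) / (1 + u)) := by rw [h2]
      _ = ε ^ (s-1) * ∫ u in Ioi (0:ℝ), u ^ (s-1) / (1 + u) := by
          field_simp
  rw [step1, MeasureTheory.integral_const_mul, step2, J_val h0 h1, hs1]
  ring

lemma gE_cont {ε α : ℝ} (hε : 0 < ε) (hα : 0 ≤ α) : Continuous (gE ε α) := by
  have hd : Continuous fun x : EuclideanSpace ℝ (Fin 2) => ε + ‖x‖ ^ α :=
    continuous_const.add (continuous_norm.rpow_const (fun x => Or.inr hα))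
  exact continuous_const.div hd (fun x => by positivity)

lemma gE_integrable {α ε : ℝ} (hα : 2 < α) (hε : 0 < ε) :
    Integrable (gE ε α) volume := by
  have hα0 : (0:ℝ) < α := by linarith
  set C : ℝ := 2 ^ α / min ε 1 with hC
  have hmin : 0 < min ε 1 := lt_min hε one_pos
  have hbound : ∀ x : EuclideanSpace ℝ (Fin 2),
      ‖gE ε α x‖ ≤ C * (1 + ‖x‖) ^ (-α) := by
    intro x
    set r : ℝ := ‖x‖ with hr
    have hr0 : 0 ≤ r := norm_nonneg x
    have hden : 0 < ε + r ^ α := by positivity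
    have h1r : (0:ℝ) < 1 + r := by linarith
    have key : (1 + r) ^ α ≤ C * (ε + r ^ α) := by
      have k1 : (1 + r) ^ α ≤ 2 ^ α * (max 1 r) ^ α := by
        rw [← Real.mul_rpow (by norm_num) (le_max_of_le_left zero_le_one)]
        exact Real.rpow_le_rpow h1r.le
          (by rcases le_total r 1 with h | h <;> simp [max_eq_left, max_eq_right, h] <;> linarith)
          hα0.le
      have k2 : (max 1 r) ^ α ≤ (ε + r ^ α) / min ε 1 := by
        rw [le_div_iff₀ hmin, mul_comm]
        rcases le_total r 1 with h | h
        · rw [max_eq_left h, Real.one_rpow, mul_one]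
          have h3 := Real.rpow_nonneg hr0 α
          have h4 := min_le_left ε 1
          linarith
        · rw [max_eq_right h]
          calc min ε 1 * r ^ α ≤ 1 * r ^ α := by
                apply mul_le_mul_of_nonneg_right (min_le_right _ _) (by positivity)
            _ ≤ ε + r ^ α := by rw [one_mul]; linarith
      calc (1 + r) ^ α ≤ 2 ^ α * ((ε + r ^ α) / min ε 1) := k1.trans
            (by exact mul_le_mul_of_nonneg_left k2 (by positivity))
        _ = C * (ε + r ^ α) := by rw [hC]; ring
    have hge : gE ε α x = 1 / (ε + r ^ α) := rfl
    rw [hge, norm_of_nonneg (by positivity), Real.rpow_neg h1r.le]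
    rw [div_le_iff₀ hden]
    have hp : (0:ℝ) < (1 + r) ^ α := by positivity
    calc (1:ℝ) = (1 + r) ^ α * ((1 + r) ^ α)⁻¹ := (mul_inv_cancel₀ hp.ne').symm
      _ ≤ (C * (ε + r ^ α)) * ((1 + r) ^ α)⁻¹ :=
          mul_le_mul_of_nonneg_right key (by positivity)
      _ = C * ((1 + r) ^ α)⁻¹ * (ε + r ^ α) := by ring
  have hint : Integrable (fun x : EuclideanSpace ℝ (Fin 2) => C * (1 + ‖x‖) ^ (-α)) volume :=
    (integrable_one_add_norm (by rw [finrank_euclideanSpace_fin]; exact_mod_cast hα)).const_mul C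
  exact hint.mono' ((gE_cont hε hα0.le).aestronglyMeasurable) (ae_of_all _ hbound)

theorem stmt5 (α ε : ℝ) (hα : 2 < α) (hε : 0 < ε) :
    Integrable (gE ε α) volume ∧
    (∫ x : EuclideanSpace ℝ (Fin 2), gE ε α x)
      = (2 * π ^ 2 / α) * ε ^ ((2 - α) / α) * (1 / Real.sin (2 * π / α)) := by
  have hα0 : (0:ℝ) < α := by linarith
  refine ⟨gE_integrable hα hε, ?_⟩
  have hpolar := MeasureTheory.integral_fun_norm_addHaar
    (volume : Measure (EuclideanSpace ℝ (Fin 2))) (fun r => 1 / (ε + r ^ α))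
  simp only [finrank_euclideanSpace_fin] at hpolar
  have hball : (volume (Metric.ball (0 : EuclideanSpace ℝ (Fin 2)) 1)).toReal = π := by
    rw [EuclideanSpace.volume_ball]
    rw [Fintype.card_fin]
    norm_num
    exact Real.sq_sqrt pi_nonneg
  rw [measureReal_def, hball] at hpolar
  have hint : (∫ x : EuclideanSpace ℝ (Fin 2), gE ε α x)
      = 2 • π • ∫ y in Ioi (0:ℝ), y ^ (2-1) • (1 / (ε + y ^ α)) := hpolar
  rw [hint]
  have hcong : ∀ y ∈ Ioi (0:ℝ), y ^ (2-1) • (1 / (ε + y ^ α)) = y / (ε + y ^ α) := by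
    intro y hy
    simp [pow_one, smul_eq_mul]
    ring
  rw [setIntegral_congr_fun measurableSet_Ioi hcong, K_val hα hε,
    show π * (2/α) = 2 * π / α by ring]
  rw [nsmul_eq_mul, smul_eq_mul]
  push_cast
  ring

end aux
end

section
/- For every real α > 2 and every ε > 0, the function g_ε(x)² = 1/(ε + |x|^α)² on ℝ² is Lebesgue integrable and ∫_{ℝ²} g_ε(x)² dx = (2π²(α−2)/α²)·ε^{(2−2α)/α}·csc(2π/α). (This evaluates the integral ∫ g_ε² appearing in the denominator of the interference correlation coefficient of Theorem 1.) -/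
open MeasureTheory Real Set

lemma beta_aux {p : ℝ} (hp0 : 0 < p) (hp1 : p < 1) :
    ∫ t in Ioo (0:ℝ) 1, t ^ (p - 1) * (1 - t) ^ (1 - p) = (1 - p) * π / Real.sin (π * p) := by
  have h2p : (0:ℝ) < 2 - p := by linarith
  have hB := Complex.Gamma_mul_Gamma_eq_betaIntegral (s := (p : ℂ)) (t := ((2 - p : ℝ) : ℂ))
    (by simpa using hp0) (by simpa using h2p)
  have hBeq : Complex.betaIntegral (p : ℂ) ((2 - p : ℝ) : ℂ)
      = ((∫ t in Ioo (0:ℝ) 1, t ^ (p - 1) * (1 - t) ^ (1 - p) : ℝ) : ℂ) := by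
    rw [Complex.betaIntegral, intervalIntegral.integral_of_le zero_le_one,
      integral_Ioc_eq_integral_Ioo]
    rw [show ((∫ t in Ioo (0:ℝ) 1, t ^ (p - 1) * (1 - t) ^ (1 - p) : ℝ) : ℂ)
        = ∫ t in Ioo (0:ℝ) 1, ((t ^ (p - 1) * (1 - t) ^ (1 - p) : ℝ) : ℂ) from
      (integral_ofReal).symm]
    refine setIntegral_congr_fun measurableSet_Ioo fun x hx => ?_
    obtain ⟨hx0, hx1⟩ := hx
    rw [Complex.ofReal_mul, Complex.ofReal_cpow hx0.le, Complex.ofReal_cpow (by linarith)]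
    push_cast
    ring_nf
  rw [hBeq] at hB
  have h2 : (p : ℂ) + ((2 - p : ℝ) : ℂ) = 2 := by push_cast; ring
  have hG2 : Complex.Gamma 2 = 1 := by
    rw [show (2:ℂ) = 1 + 1 by ring, Complex.Gamma_add_one 1 one_ne_zero, Complex.Gamma_one,
      mul_one]
  rw [h2, hG2, one_mul, Complex.Gamma_ofReal, Complex.Gamma_ofReal, ← Complex.ofReal_mul] at hB
  have hre : Real.Gamma p * Real.Gamma (2 - p)
      = ∫ t in Ioo (0:ℝ) 1, t ^ (p - 1) * (1 - t) ^ (1 - p) := by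
    exact_mod_cast hB
  rw [← hre]
  have h21 : (2 : ℝ) - p = (1 - p) + 1 := by ring
  rw [h21, Real.Gamma_add_one (by linarith : (1:ℝ) - p ≠ 0)]
  rw [show Real.Gamma p * ((1 - p) * Real.Gamma (1 - p))
      = (1 - p) * (Real.Gamma p * Real.Gamma (1 - p)) by ring,
    Real.Gamma_mul_Gamma_one_sub p]
  ring

lemma K_aux {p : ℝ} (hp0 : 0 < p) (hp1 : p < 1) :
    ∫ u in Ioi (0:ℝ), u ^ (p - 1) / (1 + u) ^ 2
      = ∫ t in Ioo (0:ℝ) 1, t ^ (p - 1) * (1 - t) ^ (1 - p) := by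
  have hderiv : ∀ t ∈ Ioo (0:ℝ) 1,
      HasDerivWithinAt (fun t : ℝ => t / (1 - t)) (((1 - t) ^ 2)⁻¹) (Ioo 0 1) t := by
    intro t ht
    have h1t : (1 : ℝ) - t ≠ 0 := by have := ht.2; intro h; linarith [h]
    have := (hasDerivAt_id t).div ((hasDerivAt_const t 1).sub (hasDerivAt_id t)) h1t
    refine HasDerivAt.hasDerivWithinAt (this.congr_deriv ?_)
    simp
  have hinj : InjOn (fun t : ℝ => t / (1 - t)) (Ioo 0 1) := by
    intro a ha b hb hab
    have h1a : (1 : ℝ) - a ≠ 0 := by have := ha.2; intro h; linarith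
    have h1b : (1 : ℝ) - b ≠ 0 := by have := hb.2; intro h; linarith
    field_simp at hab
    linarith [hab]
  have himg : (fun t : ℝ => t / (1 - t)) '' Ioo 0 1 = Ioi 0 := by
    ext u
    constructor
    · rintro ⟨t, ht, rfl⟩
      exact div_pos ht.1 (by linarith [ht.2])
    · intro hu
      refine ⟨u / (1 + u), ⟨div_pos hu (by linarith [mem_Ioi.mp hu]), ?_⟩, ?_⟩
      · rw [div_lt_one (by linarith [mem_Ioi.mp hu])]; linarith [mem_Ioi.mp hu]
      · have h1u : (1 : ℝ) + u ≠ 0 := by have := mem_Ioi.mp hu; positivity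
        field_simp
        ring
  have := integral_image_eq_integral_abs_deriv_smul measurableSet_Ioo hderiv hinj
    (fun u => u ^ (p - 1) / (1 + u) ^ 2)
  rw [himg] at this
  rw [this]
  refine setIntegral_congr_fun measurableSet_Ioo fun t ht => ?_
  obtain ⟨ht0, ht1⟩ := ht
  have h1t : (0 : ℝ) < 1 - t := by linarith
  have h1 : (1 : ℝ) + t / (1 - t) = (1 - t)⁻¹ := by field_simp; ring
  rw [smul_eq_mul, h1, div_rpow ht0.le h1t.le, abs_of_pos (by positivity)]
  have hr : (0:ℝ) < (1 - t) ^ (p - 1) := Real.rpow_pos_of_pos h1t _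
  rw [show ((1 - t) ^ 2)⁻¹ * (t ^ (p - 1) / (1 - t) ^ (p - 1) / ((1 - t)⁻¹) ^ 2)
      = t ^ (p - 1) / (1 - t) ^ (p - 1) by
    field_simp]
  rw [div_eq_mul_inv, ← Real.rpow_neg h1t.le, neg_sub]

lemma J_aux {α : ℝ} (hα : 2 < α) :
    ∫ s in Ioi (0:ℝ), s / (1 + s ^ α) ^ 2
      = (1 / α) * ∫ u in Ioi (0:ℝ), u ^ (2 / α - 1) / (1 + u) ^ 2 := by
  have hα0 : (0:ℝ) < α := by linarith
  have h := integral_comp_rpow_Ioi_of_pos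
    (g := fun u => (1 / α) * (u ^ (2 / α - 1) / (1 + u) ^ 2)) hα0
  rw [← integral_const_mul, ← h]
  refine setIntegral_congr_fun measurableSet_Ioi fun s hs => ?_
  have hs0 : (0:ℝ) < s := hs
  rw [show ((s ^ α) ^ (2 / α - 1)) = s ^ (2 - α) by
    rw [← Real.rpow_mul hs0.le]; congr 1; field_simp]
  have hmul : s ^ (α - 1) * s ^ (2 - α) = s := by
    rw [← Real.rpow_add hs0]; norm_num
  rw [smul_eq_mul, show α * s ^ (α - 1) * (1 / α * (s ^ (2 - α) / (1 + s ^ α) ^ 2))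
      = (s ^ (α - 1) * s ^ (2 - α)) / (1 + s ^ α) ^ 2 by field_simp, hmul]

lemma scale_aux {α ε : ℝ} (hα : 2 < α) (hε : 0 < ε) :
    ∫ y in Ioi (0:ℝ), y / (ε + y ^ α) ^ 2
      = ε ^ (2 / α - 2) * ∫ s in Ioi (0:ℝ), s / (1 + s ^ α) ^ 2 := by
  have hα0 : (0:ℝ) < α := by linarith
  set b : ℝ := ε ^ α⁻¹ with hb_def
  have hb : 0 < b := Real.rpow_pos_of_pos hε _
  have hbα : b ^ α = ε := by
    rw [hb_def, ← Real.rpow_mul hε.le, inv_mul_cancel₀ hα0.ne', Real.rpow_one]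
  have h := integral_comp_mul_left_Ioi (fun y => y / (ε + y ^ α) ^ 2) 0 hb
  rw [mul_zero] at h
  have h2 : ∫ x in Ioi (0:ℝ), (b * x) / (ε + (b * x) ^ α) ^ 2
      = (b / ε ^ 2) * ∫ x in Ioi (0:ℝ), x / (1 + x ^ α) ^ 2 := by
    rw [← integral_const_mul]
    refine setIntegral_congr_fun measurableSet_Ioi fun x hx => ?_
    have hx0 : (0:ℝ) < x := hx
    rw [Real.mul_rpow hb.le hx0.le, hbα]
    have : ε + ε * x ^ α = ε * (1 + x ^ α) := by ring
    rw [this, mul_pow]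
    have h1x : (0:ℝ) < 1 + x ^ α := by positivity
    field_simp
  beta_reduce at h
  rw [h2] at h
  have h3 : ∫ y in Ioi (0:ℝ), y / (ε + y ^ α) ^ 2
      = b * ((b / ε ^ 2) * ∫ x in Ioi (0:ℝ), x / (1 + x ^ α) ^ 2) := by
    rw [h, smul_eq_mul, ← mul_assoc, mul_inv_cancel₀ hb.ne', one_mul]
  rw [h3, ← mul_assoc]
  congr 1
  have hb2 : b * (b / ε ^ 2) = ε ^ (2 * α⁻¹) / ε ^ 2 := by
    rw [div_eq_mul_inv, div_eq_mul_inv, ← mul_assoc, ← Real.rpow_add hε]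
    ring_nf
  rw [hb2, ← Real.rpow_natCast ε 2, ← Real.rpow_sub hε,
    show (2 * α⁻¹ - ((2:ℕ):ℝ)) = 2 / α - 2 by push_cast; ring]

theorem stmt6 (α ε : ℝ) (hα : 2 < α) (hε : 0 < ε) :
    Integrable (fun x : EuclideanSpace ℝ (Fin 2) => (gE ε α x) ^ 2) volume ∧
    (∫ x : EuclideanSpace ℝ (Fin 2), (gE ε α x) ^ 2)
      = (2 * π ^ 2 * (α - 2) / α ^ 2) * ε ^ ((2 - 2 * α) / α) * (1 / Real.sin (2 * π / α)) := by
  have hα0 : (0:ℝ) < α := by linarith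
  set E := EuclideanSpace ℝ (Fin 2)
  -- positivity of the denominator
  have hden : ∀ x : E, 0 < ε + ‖x‖ ^ α := fun x => by positivity
  -- Integrability
  have hcont : Continuous fun x : E => (gE ε α x) ^ 2 := by
    apply Continuous.pow
    apply Continuous.div continuous_const
    · exact continuous_const.add (continuous_norm.rpow_const fun x => Or.inr hα0.le)
    · exact fun x => (hden x).ne'
  set c : ℝ := 4 / min ε 1 with hc_def
  have hmin : 0 < min ε 1 := lt_min hε one_pos
  have hc : 0 < c := by positivity
  have hc4 : 4 ≤ c := by
    rw [hc_def, le_div_iff₀ hmin]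
    nlinarith [min_le_right ε 1]
  have hbound : ∀ t : ℝ, 0 ≤ t → (1 + t) ^ 2 ≤ c * (ε + t ^ α) := by
    intro t ht
    have htα : 0 ≤ t ^ α := Real.rpow_nonneg ht _
    rcases le_total t 1 with h1 | h1
    · have hcε : 4 ≤ c * ε := by
        rw [hc_def, div_mul_eq_mul_div, le_div_iff₀ hmin]
        nlinarith [min_le_left ε 1]
      nlinarith
    · have ht2 : t ^ (2:ℝ) ≤ t ^ α := Real.rpow_le_rpow_of_exponent_le h1 hα.le
      rw [show t ^ (2:ℝ) = t ^ (2:ℕ) by rw [← Real.rpow_natCast t 2]; norm_num] at ht2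
      nlinarith
  have hint : Integrable (fun x : E => (gE ε α x) ^ 2) volume := by
    have h24 : (Module.finrank ℝ E : ℝ) < 4 := by
      simp [E, finrank_euclideanSpace_fin]; norm_num
    refine ((integrable_one_add_norm h24).const_mul (c ^ 2)).mono'
      hcont.aestronglyMeasurable (ae_of_all _ fun x => ?_)
    have ht : (0:ℝ) ≤ ‖x‖ := norm_nonneg x
    have hd := hden x
    have h1 := hbound ‖x‖ ht
    have h4 : (1 + ‖x‖) ^ (-(4:ℝ)) = (((1 + ‖x‖) ^ 2) ^ 2)⁻¹ := by
      rw [Real.rpow_neg (by positivity)]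
      congr 1
      rw [show (4:ℝ) = ((4:ℕ):ℝ) by norm_num, Real.rpow_natCast]
      ring
    have key : (1:ℝ) / (ε + ‖x‖ ^ α) ^ 2 ≤ c ^ 2 / ((1 + ‖x‖) ^ 2) ^ 2 := by
      rw [div_le_div_iff₀ (by positivity) (by positivity)]
      nlinarith [mul_le_mul h1 h1 (by positivity : (0:ℝ) ≤ (1 + ‖x‖) ^ 2) (by positivity : (0:ℝ) ≤ c * (ε + ‖x‖ ^ α))]
    rw [norm_of_nonneg (by positivity), gE, div_pow, one_pow, h4]
    calc (1:ℝ) / (ε + ‖x‖ ^ α) ^ 2 ≤ c ^ 2 / ((1 + ‖x‖) ^ 2) ^ 2 := key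
      _ = c ^ 2 * (((1 + ‖x‖) ^ 2) ^ 2)⁻¹ := by rw [div_eq_mul_inv]
  refine ⟨hint, ?_⟩
  -- reduce to radial integral
  have hradial := integral_fun_norm_addHaar (volume : Measure E)
    (fun y : ℝ => (1 / (ε + y ^ α)) ^ 2)
  have hfin : Module.finrank ℝ E = 2 := finrank_euclideanSpace_fin
  have hball : (volume (Metric.ball (0:E) 1)).toReal = π := by
    rw [EuclideanSpace.volume_ball]
    simp only [Fintype.card_fin]
    norm_num [Real.Gamma_two, Real.sq_sqrt Real.pi_nonneg, ENNReal.toReal_ofReal Real.pi_nonneg]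
  have hEq : (fun x : E => (gE ε α x) ^ 2) = fun x : E => (1 / (ε + ‖x‖ ^ α)) ^ 2 := rfl
  rw [show (∫ x : E, (gE ε α x) ^ 2) = ∫ x : E, (1 / (ε + ‖x‖ ^ α)) ^ 2 from rfl, hradial,
    hfin, measureReal_def, hball]
  have hIoi : ∫ y in Ioi (0:ℝ), y ^ (2 - 1) • (1 / (ε + y ^ α)) ^ 2
      = ∫ y in Ioi (0:ℝ), y / (ε + y ^ α) ^ 2 := by
    refine setIntegral_congr_fun measurableSet_Ioi fun y hy => ?_
    simp only [pow_one, smul_eq_mul, div_pow, one_pow]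
    ring
  rw [hIoi, scale_aux hα hε, J_aux hα]
  have hp0 : (0:ℝ) < 2 / α := by positivity
  have hp1 : 2 / α < 1 := by rw [div_lt_one hα0]; linarith
  rw [K_aux hp0 hp1, beta_aux hp0 hp1]
  have hsin : Real.sin (π * (2 / α)) = Real.sin (2 * π / α) := by ring_nf
  have hexp : ε ^ ((2 - 2 * α) / α) = ε ^ (2 / α - 2) := by
    congr 1
    field_simp
  rw [hsin, hexp, nsmul_eq_mul, smul_eq_mul]
  field_simp
  ring
end

section
/- Fix ε > 0 and α > 2, and let g_ε(x) = 1/(ε + |x|^α) on ℝ². For every nonzero v ∈ ℝ², the shifted correlation integral satisfies ∫_{ℝ²} g_ε(x)·g_ε(x − v) dx < ∫_{ℝ²} g_ε(x)² dx (both integrals being finite). (This is the strict inequality θ < θ′ between the numerator and denominator integrals of the PPP correlation coefficient ζ_P, which guarantees 0 < ζ_P < 1 and is needed in the proofs of Propositions 1 and 2.) -/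
open MeasureTheory Real
open scoped InnerProductSpace

theorem stmt10 (ε α : ℝ) (hε : 0 < ε) (hα : 2 < α)
    (v : EuclideanSpace ℝ (Fin 2)) (hv : v ≠ 0) :
    Integrable (fun x : EuclideanSpace ℝ (Fin 2) => gE ε α x * gE ε α (x - v)) volume ∧
    Integrable (fun x : EuclideanSpace ℝ (Fin 2) => (gE ε α x) ^ 2) volume ∧
    (∫ x : EuclideanSpace ℝ (Fin 2), gE ε α x * gE ε α (x - v))
      < ∫ x : EuclideanSpace ℝ (Fin 2), (gE ε α x) ^ 2 := by
  have hα0 : (0:ℝ) < α := by linarith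
  have hden : ∀ x : EuclideanSpace ℝ (Fin 2), 0 < ε + ‖x‖ ^ α := fun x => by
    have := Real.rpow_nonneg (norm_nonneg x) α
    linarith
  have hgpos : ∀ x : EuclideanSpace ℝ (Fin 2), 0 < gE ε α x := fun x => by
    unfold gE; positivity
  -- continuity
  have hcont : Continuous (gE ε α) := by
    unfold gE
    exact continuous_const.div
      (continuous_const.add (continuous_norm.rpow_const fun x => Or.inr hα0.le))
      (fun x => (hden x).ne')
  -- lower bound for the denominator
  set c : ℝ := min ε 1 / 2 ^ (α : ℝ) with hc
  have hcpos : 0 < c := by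
    have : (0:ℝ) < 2 ^ (α:ℝ) := Real.rpow_pos_of_pos two_pos α
    have : 0 < min ε 1 := lt_min hε one_pos
    positivity
  have hlow : ∀ x : EuclideanSpace ℝ (Fin 2), c * (1 + ‖x‖) ^ α ≤ ε + ‖x‖ ^ α := by
    intro x
    rcases le_total ‖x‖ 1 with h1 | h1
    · have h2 : (1 + ‖x‖) ^ α ≤ 2 ^ (α:ℝ) := by
        apply Real.rpow_le_rpow (by positivity) (by linarith) hα0.le
      have h3 : c * (1 + ‖x‖) ^ α ≤ c * 2 ^ (α:ℝ) :=
        mul_le_mul_of_nonneg_left h2 hcpos.le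
      have h4 : c * 2 ^ (α:ℝ) = min ε 1 := by
        rw [hc, div_mul_cancel₀ _ (Real.rpow_pos_of_pos two_pos α).ne']
      have h5 : min ε 1 ≤ ε := min_le_left _ _
      have := Real.rpow_nonneg (norm_nonneg x) α
      linarith [h3, h4 ▸ h3]
    · have h2 : (1 + ‖x‖) ^ α ≤ (2 * ‖x‖) ^ α := by
        apply Real.rpow_le_rpow (by positivity) (by linarith) hα0.le
      have h2' : (2 * ‖x‖) ^ α = 2 ^ (α:ℝ) * ‖x‖ ^ α :=
        Real.mul_rpow (by norm_num) (norm_nonneg x)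
      have h3 : c * (1 + ‖x‖) ^ α ≤ c * (2 ^ (α:ℝ) * ‖x‖ ^ α) := by
        apply mul_le_mul_of_nonneg_left _ hcpos.le
        rw [← h2']; exact h2
      have h4 : c * (2 ^ (α:ℝ) * ‖x‖ ^ α) = min ε 1 * ‖x‖ ^ α := by
        have h2pos : (0:ℝ) < 2 ^ (α:ℝ) := Real.rpow_pos_of_pos two_pos α
        rw [hc, ← mul_assoc, div_mul_cancel₀ _ h2pos.ne']
      have h5 : min ε 1 * ‖x‖ ^ α ≤ 1 * ‖x‖ ^ α := by
        apply mul_le_mul_of_nonneg_right (min_le_right _ _)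
          (Real.rpow_nonneg (norm_nonneg x) α)
      have := Real.rpow_nonneg (norm_nonneg x) α
      nlinarith
  -- pointwise upper bound for g
  have hub : ∀ x : EuclideanSpace ℝ (Fin 2), gE ε α x ≤ c⁻¹ * (1 + ‖x‖) ^ (-α) := by
    intro x
    have h1 : (0:ℝ) < (1 + ‖x‖) ^ α := Real.rpow_pos_of_pos (by positivity) α
    have h2 : gE ε α x ≤ 1 / (c * (1 + ‖x‖) ^ α) := by
      unfold gE
      apply one_div_le_one_div_of_le (by positivity) (hlow x)
    calc gE ε α x ≤ 1 / (c * (1 + ‖x‖) ^ α) := h2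
      _ = c⁻¹ * (1 + ‖x‖) ^ (-α) := by
          rw [Real.rpow_neg (by positivity), one_div, mul_inv]
  have hfinrank : (Module.finrank ℝ (EuclideanSpace ℝ (Fin 2)) : ℝ) = 2 := by
    simp [finrank_euclideanSpace_fin]
  -- integrability of g²
  have hg2 : Integrable (fun x : EuclideanSpace ℝ (Fin 2) => (gE ε α x) ^ 2) volume := by
    have hint : Integrable (fun x : EuclideanSpace ℝ (Fin 2) => (1 + ‖x‖) ^ (-(2*α))) volume := by
      apply integrable_one_add_norm
      rw [hfinrank]; linarith
    apply Integrable.mono' (hint.const_mul (c⁻¹ ^ 2))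
    · exact ((hcont.pow 2).aestronglyMeasurable)
    · filter_upwards with x
      rw [Real.norm_eq_abs, abs_of_nonneg (sq_nonneg _)]
      have h2 : gE ε α x ≤ c⁻¹ * (1 + ‖x‖) ^ (-α) := hub x
      have h3 : (gE ε α x) ^ 2 ≤ (c⁻¹ * (1 + ‖x‖) ^ (-α)) ^ 2 := by
        apply pow_le_pow_left₀ (hgpos x).le h2
      calc (gE ε α x) ^ 2 ≤ (c⁻¹ * (1 + ‖x‖) ^ (-α)) ^ 2 := h3
        _ = c⁻¹ ^ 2 * ((1 + ‖x‖) ^ (-α)) ^ 2 := by ring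
        _ = c⁻¹ ^ 2 * (1 + ‖x‖) ^ (-(2*α)) := by
            rw [← Real.rpow_natCast ((1 + ‖x‖) ^ (-α)) 2, ← Real.rpow_mul (by positivity)]
            congr 1
            push_cast
            ring
  have hg2v : Integrable (fun x : EuclideanSpace ℝ (Fin 2) => (gE ε α (x - v)) ^ 2) volume :=
    hg2.comp_sub_right v
  -- integrability of the product
  have hprod : Integrable
      (fun x : EuclideanSpace ℝ (Fin 2) => gE ε α x * gE ε α (x - v)) volume := by
    apply Integrable.mono' ((hg2.add hg2v).div_const 2)
    · exact (hcont.mul (hcont.comp (continuous_id.sub continuous_const))).aestronglyMeasurable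
    · filter_upwards with x
      have h1 : 0 < gE ε α x := hgpos x
      have h2 : 0 < gE ε α (x - v) := hgpos (x - v)
      simp only [Pi.add_apply]
      rw [Real.norm_eq_abs, abs_of_nonneg (by positivity : (0:ℝ) ≤ gE ε α x * gE ε α (x - v))]
      nlinarith [sq_nonneg (gE ε α x - gE ε α (x - v))]
  refine ⟨hprod, hg2, ?_⟩
  -- the difference squared
  set h : EuclideanSpace ℝ (Fin 2) → ℝ := fun x => (gE ε α x - gE ε α (x - v)) ^ 2 with hh
  have hhe : h = fun x => (gE ε α x) ^ 2 + (gE ε α (x - v)) ^ 2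
      - 2 * (gE ε α x * gE ε α (x - v)) := funext fun x => by rw [hh]; ring
  have hhint : Integrable h volume := by
    rw [hhe]; exact (hg2.add hg2v).sub (hprod.const_mul 2)
  -- the perpendicular bisector as an affine subspace
  set K : Submodule ℝ (EuclideanSpace ℝ (Fin 2)) := (ℝ ∙ v)ᗮ with hK
  set T : AffineSubspace ℝ (EuclideanSpace ℝ (Fin 2)) :=
    AffineSubspace.mk' ((2:ℝ)⁻¹ • v) K with hT
  have hTne : T ≠ ⊤ := by
    intro ht
    have hvK : v ∈ K := by
      have : v ∈ T := by rw [ht]; trivial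
      have h2 : v -ᵥ (2:ℝ)⁻¹ • v ∈ K := (AffineSubspace.mem_mk').1 this
      have h3 : v -ᵥ (2:ℝ)⁻¹ • v = (2:ℝ)⁻¹ • v := by
        rw [vsub_eq_sub]; module
      rw [h3] at h2
      have := K.smul_mem (2:ℝ) h2
      rwa [smul_smul, mul_inv_cancel₀ (two_ne_zero), one_smul] at this
    have hvv : ⟪v, v⟫_ℝ = 0 :=
      Submodule.mem_orthogonal_singleton_iff_inner_right.1 hvK
    exact hv (inner_self_eq_zero.1 hvv)
  have hTnull : volume (T : Set (EuclideanSpace ℝ (Fin 2))) = 0 :=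
    Measure.addHaar_affineSubspace volume T hTne
  -- points where h vanishes lie in T
  have hsupp : ∀ x : EuclideanSpace ℝ (Fin 2), x ∉ (T : Set (EuclideanSpace ℝ (Fin 2))) →
      x ∈ Function.support h := by
    intro x hx
    intro hx0
    apply hx
    have h1 : gE ε α x = gE ε α (x - v) := by
      have := sq_eq_zero_iff.1 hx0
      linarith [sub_eq_zero.1 this]
    have h2 : ε + ‖x‖ ^ α = ε + ‖x - v‖ ^ α := by
      unfold gE at h1
      field_simp at h1
      linarith [h1]
    have h3 : ‖x‖ ^ α = ‖x - v‖ ^ α := by linarith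
    have h4 : ‖x‖ = ‖x - v‖ :=
      Real.rpow_left_injOn hα0.ne' (norm_nonneg x) (norm_nonneg _) h3
    -- translate into an inner product condition
    have h5 : ‖x - v‖ ^ 2 = ‖x‖ ^ 2 - 2 * ⟪x, v⟫_ℝ + ‖v‖ ^ 2 := norm_sub_sq_real x v
    have h6 : ⟪x, v⟫_ℝ = ‖v‖ ^ 2 / 2 := by
      rw [← h4] at h5
      linarith
    -- show x ∈ T
    rw [hT]
    apply (AffineSubspace.mem_mk').2
    rw [hK]
    apply Submodule.mem_orthogonal_singleton_iff_inner_right.2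
    rw [vsub_eq_sub, inner_sub_right, inner_smul_right]
    rw [real_inner_self_eq_norm_sq]
    rw [real_inner_comm]
    rw [h6]
    ring
  -- positivity of ∫ h
  have hIh : 0 < ∫ x, h x := by
    rw [integral_pos_iff_support_of_nonneg (fun x => sq_nonneg _) hhint]
    by_contra hcon
    push_neg at hcon
    have h0 : volume (Function.support h) = 0 := le_antisymm hcon zero_le
    have hcover : (Set.univ : Set (EuclideanSpace ℝ (Fin 2))) ⊆
        Function.support h ∪ (T : Set (EuclideanSpace ℝ (Fin 2))) := by
      intro x _
      by_cases hxT : x ∈ (T : Set (EuclideanSpace ℝ (Fin 2)))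
      · exact Or.inr hxT
      · exact Or.inl (hsupp x hxT)
    have : volume (Set.univ : Set (EuclideanSpace ℝ (Fin 2))) = 0 := by
      refine measure_mono_null hcover ?_
      exact measure_union_null h0 hTnull
    simp at this
  -- translation invariance
  have htrans : ∫ x, (gE ε α (x - v)) ^ 2 = ∫ x, (gE ε α x) ^ 2 :=
    integral_sub_right_eq_self (fun x => (gE ε α x) ^ 2) v
  -- combine
  have hsplit : ∫ x, h x = (∫ x, (gE ε α x) ^ 2) + (∫ x, (gE ε α (x - v)) ^ 2)
      - 2 * ∫ x, gE ε α x * gE ε α (x - v) := by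
    have h1 : Integrable (fun x : EuclideanSpace ℝ (Fin 2) =>
        (gE ε α x) ^ 2 + (gE ε α (x - v)) ^ 2) volume := hg2.add hg2v
    have h2 : Integrable (fun x : EuclideanSpace ℝ (Fin 2) =>
        2 * (gE ε α x * gE ε α (x - v))) volume := hprod.const_mul 2
    rw [hhe, integral_sub h1 h2, integral_add hg2 hg2v, integral_const_mul]
  rw [htrans] at hsplit
  linarith
end

section
/- (Interference integral behind the constant U_n in Lemma 6) Let α > 2, set δ = 2/α, let θ > 0 and let n ≥ 1 be an integer. Then 2π·∫₀^∞ (1 − (1 + θ·t^{−α})^{−n})·t dt = θ^{δ}·U_n, where U_n = (π²δ/sin(πδ))·Γ(n + δ)/(Γ(n)·Γ(1 + δ)); equivalently the integral equals π·θ^{δ}·Γ(1 − δ)·Γ(n + δ)/Γ(n). -/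
open MeasureTheory Real Set

lemma realBeta (a b : ℝ) (ha : 0 < a) (hb : 0 < b) :
    ∫ x in (0:ℝ)..1, x ^ (a-1) * (1-x) ^ (b-1) = Gamma a * Gamma b / Gamma (a+b) := by
  have hc := Complex.Gamma_mul_Gamma_eq_betaIntegral (s := (a:ℂ)) (t := (b:ℂ))
    (by simpa using ha) (by simpa using hb)
  have hbeta : Complex.betaIntegral a b
      = ((∫ x in (0:ℝ)..1, x ^ (a-1) * (1-x) ^ (b-1) : ℝ) : ℂ) := by
    rw [Complex.betaIntegral, ← intervalIntegral.integral_ofReal]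
    refine intervalIntegral.integral_congr fun x hx => ?_
    rw [Set.uIcc_of_le (by norm_num : (0:ℝ) ≤ 1)] at hx
    rw [Complex.ofReal_mul, Complex.ofReal_cpow hx.1, Complex.ofReal_cpow (by linarith [hx.2])]
    push_cast
    ring
  have hne : Real.Gamma (a+b) ≠ 0 := (Real.Gamma_pos_of_pos (by linarith)).ne'
  have key : Real.Gamma a * Real.Gamma b
      = Real.Gamma (a+b) * ∫ x in (0:ℝ)..1, x ^ (a-1) * (1-x) ^ (b-1) := by
    have : ((Real.Gamma a * Real.Gamma b : ℝ) : ℂ)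
        = ((Real.Gamma (a+b) * ∫ x in (0:ℝ)..1, x ^ (a-1) * (1-x) ^ (b-1) : ℝ) : ℂ) := by
      push_cast
      rw [← Complex.Gamma_ofReal, ← Complex.Gamma_ofReal, ← Complex.Gamma_ofReal]
      push_cast
      rw [hc, hbeta]
    exact_mod_cast this
  field_simp
  linarith [key]

noncomputable def fsub : ℝ → ℝ := fun x => x / (1 - x)
noncomputable def fsub' : ℝ → ℝ := fun x => ((1 - x)^2)⁻¹

lemma fsub_deriv {x : ℝ} (hx : x ∈ Ioo (0:ℝ) 1) :
    HasDerivWithinAt fsub (fsub' x) (Ioo (0:ℝ) 1) x := by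
  have h1 : (1:ℝ) - x ≠ 0 := by have := hx.2; intro h; linarith [(by linarith : x = 1)]
  have h := (hasDerivAt_id x).div ((hasDerivAt_const x (1:ℝ)).sub (hasDerivAt_id x)) h1
  simp only [id] at h
  have he : (1 * (1 - x) - x * (0 - 1)) / (1 - x) ^ 2 = fsub' x := by
    have : (1 * (1 - x) - x * (0 - 1)) = 1 := by ring
    rw [this, fsub', one_div]
  replace h : HasDerivAt (id / ((fun _ => (1:ℝ)) - id)) (fsub' x) x := by rw [← he]; exact h
  exact h.hasDerivWithinAt

lemma fsub_inj : InjOn fsub (Ioo (0:ℝ) 1) := by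
  intro x hx y hy hxy
  have h1 : (1:ℝ) - x ≠ 0 := by have := hx.2; intro h; linarith [(by linarith : x = 1)]
  have h2 : (1:ℝ) - y ≠ 0 := by have := hy.2; intro h; linarith [(by linarith : y = 1)]
  have : x * (1 - y) = y * (1 - x) := by
    simp only [fsub] at hxy; rw [div_eq_div_iff h1 h2] at hxy
    linarith [hxy]
  nlinarith [this]

lemma fsub_image : fsub '' (Ioo (0:ℝ) 1) = Ioi 0 := by
  ext v
  constructor
  · rintro ⟨x, hx, rfl⟩
    exact div_pos hx.1 (by linarith [hx.2])
  · intro hv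
    have hv' : (0:ℝ) < v := hv
    refine ⟨v / (1 + v), ⟨div_pos hv' (by linarith), ?_⟩, ?_⟩
    · rw [div_lt_one (by linarith)]; linarith
    · have h1 : (1:ℝ) + v ≠ 0 := by positivity
      have h2 : (1:ℝ) - v / (1 + v) ≠ 0 := by
        intro h
        have : v / (1 + v) = 1 := by linarith
        rw [div_eq_one_iff_eq h1] at this; linarith
      simp only [fsub]
      field_simp
      ring

lemma fsub_pointwise {a b : ℝ} {x : ℝ} (hx : x ∈ Ioo (0:ℝ) 1) :
    |fsub' x| • ((fsub x) ^ (a-1) * (1 + fsub x) ^ (-(a+b)))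
      = x ^ (a-1) * (1-x) ^ (b-1) := by
  have hx0 : (0:ℝ) < x := hx.1
  have hx1 : (0:ℝ) < 1 - x := by linarith [hx.2]
  have h1 : 1 + fsub x = (1 - x)⁻¹ := by
    simp only [fsub]; field_simp; ring
  have h2 : fsub x = x * (1-x)⁻¹ := by simp only [fsub]; rw [div_eq_mul_inv]
  have h3 : (1 - x)⁻¹ = (1-x) ^ (-1:ℝ) := by rw [Real.rpow_neg_one]
  have h4 : fsub' x = (1-x) ^ (-2:ℝ) := by
    simp only [fsub']
    rw [← Real.rpow_natCast (1-x) 2, ← Real.rpow_neg hx1.le]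
    norm_num
  rw [h1, h2, h3, h4, smul_eq_mul,
    abs_of_pos (Real.rpow_pos_of_pos hx1 _),
    Real.mul_rpow hx0.le (Real.rpow_pos_of_pos hx1 _).le,
    ← Real.rpow_mul hx1.le, ← Real.rpow_mul hx1.le]
  rw [show (1-x) ^ (-2:ℝ) * (x ^ (a-1) * (1-x) ^ (-1*(a-1)) * (1-x) ^ (-1*-(a+b)))
      = x ^ (a-1) * ((1-x) ^ (-2:ℝ) * (1-x) ^ (-1*(a-1)) * (1-x) ^ (-1*-(a+b))) from by ring]
  rw [← Real.rpow_add hx1, ← Real.rpow_add hx1]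
  rw [show (-2 + -1*(a-1) + -1*-(a+b) : ℝ) = b - 1 from by ring]

lemma betaIoo_integrable {a b : ℝ} (ha : 0 < a) (hb : 0 < b) :
    IntegrableOn (fun x : ℝ => x ^ (a-1) * (1-x) ^ (b-1)) (Ioo 0 1) := by
  have hC := Complex.betaIntegral_convergent (u := (a:ℂ)) (v := (b:ℂ))
    (by simpa using ha) (by simpa using hb)
  have hC' : IntegrableOn (fun x : ℝ => (x:ℂ) ^ ((a:ℂ)-1) * (1-(x:ℂ)) ^ ((b:ℂ)-1)) (Ioc 0 1) :=
    (intervalIntegrable_iff_integrableOn_Ioc_of_le (by norm_num)).mp hC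
  have hre : IntegrableOn
      (fun x : ℝ => Complex.reCLM ((x:ℂ) ^ ((a:ℂ)-1) * (1-(x:ℂ)) ^ ((b:ℂ)-1))) (Ioc 0 1) :=
    Complex.reCLM.integrable_comp hC'
  refine (hre.mono_set Ioo_subset_Ioc_self).congr_fun ?_ measurableSet_Ioo
  intro x hx
  have hx0 : (0:ℝ) ≤ x := hx.1.le
  have hx1 : (0:ℝ) ≤ 1 - x := by linarith [hx.2]
  have : ((x:ℂ) ^ ((a:ℂ)-1) * (1-(x:ℂ)) ^ ((b:ℂ)-1))
      = ((x ^ (a-1) * (1-x) ^ (b-1) : ℝ) : ℂ) := by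
    rw [Complex.ofReal_mul, Complex.ofReal_cpow hx0, Complex.ofReal_cpow hx1]
    push_cast
    ring
  simp [this]

lemma betaIoi_eq {a b : ℝ} (ha : 0 < a) (hb : 0 < b) :
    ∫ v in Ioi (0:ℝ), v ^ (a-1) * (1+v) ^ (-(a+b)) = Gamma a * Gamma b / Gamma (a+b) := by
  have key := integral_image_eq_integral_abs_deriv_smul (f := fsub) (f' := fsub')
    measurableSet_Ioo (fun x hx => fsub_deriv hx) fsub_inj
    (fun v => v ^ (a-1) * (1+v) ^ (-(a+b)))
  rw [fsub_image] at key
  rw [key]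
  rw [setIntegral_congr_fun measurableSet_Ioo (fun x hx => fsub_pointwise hx)]
  rw [← integral_Ioc_eq_integral_Ioo, ← intervalIntegral.integral_of_le (by norm_num : (0:ℝ) ≤ 1)]
  exact realBeta a b ha hb

lemma betaIoi_integrable {a b : ℝ} (ha : 0 < a) (hb : 0 < b) :
    IntegrableOn (fun v : ℝ => v ^ (a-1) * (1+v) ^ (-(a+b))) (Ioi 0) := by
  have key := integrableOn_image_iff_integrableOn_abs_deriv_smul (f := fsub) (f' := fsub')
    measurableSet_Ioo (fun x hx => fsub_deriv hx) fsub_inj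
    (fun v => v ^ (a-1) * (1+v) ^ (-(a+b)))
  rw [fsub_image] at key
  rw [key]
  exact (betaIoo_integrable ha hb).congr_fun
    (fun x hx => (fsub_pointwise hx).symm) measurableSet_Ioo

lemma gammaSum (δ : ℝ) (hδ : 0 < δ) : ∀ n : ℕ, 1 ≤ n →
    ∑ k ∈ Finset.range n, Gamma (1-δ) * Gamma (k+δ) / Gamma (k+1)
      = Gamma (1-δ) * Gamma (n+δ) / (δ * Gamma n) := by
  intro n
  induction n with
  | zero => omega
  | succ m ih =>
    intro _
    rcases Nat.eq_zero_or_pos m with hm | hm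
    · subst hm
      simp only [Finset.range_one, Finset.sum_singleton, Nat.cast_zero, Nat.cast_one,
        zero_add]
      rw [Real.Gamma_one, show (1:ℝ) + δ = δ + 1 from add_comm 1 δ,
        Real.Gamma_add_one hδ.ne']
      field_simp
    · have hmne : (m:ℝ) ≠ 0 := Nat.cast_ne_zero.mpr hm.ne'
      have hΓm : Real.Gamma ((m:ℝ)+1) = m * Real.Gamma m := Real.Gamma_add_one hmne
      have hΓmδ : Real.Gamma ((m:ℝ)+1+δ) = ((m:ℝ)+δ) * Real.Gamma ((m:ℝ)+δ) := by
        rw [show (m:ℝ)+1+δ = ((m:ℝ)+δ)+1 from by ring, Real.Gamma_add_one (by positivity)]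
      have hΓmpos : 0 < Real.Gamma (m:ℝ) :=
        Real.Gamma_pos_of_pos (by exact_mod_cast hm)
      rw [Finset.sum_range_succ, ih hm]
      push_cast
      rw [hΓmδ, hΓm]
      field_simp

lemma telescope {u : ℝ} (hu : 0 < u) (n : ℕ) :
    1 - ((1+u)^n)⁻¹ = ∑ k ∈ Finset.range n, u * ((1+u)^(k+1))⁻¹ := by
  have h1u : (0:ℝ) < 1 + u := by linarith
  have : ∀ k : ℕ, u * ((1+u)^(k+1))⁻¹ = ((1+u)^k)⁻¹ - ((1+u)^(k+1))⁻¹ := by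
    intro k
    rw [pow_succ]
    field_simp
    ring
  simp_rw [this]
  rw [Finset.sum_range_sub' (fun k => ((1+u)^k)⁻¹)]
  simp

lemma uIntegral (δ : ℝ) (hδ0 : 0 < δ) (hδ1 : δ < 1) (n : ℕ) (hn : 1 ≤ n) :
    ∫ u in Ioi (0:ℝ), (1 - ((1+u)^n)⁻¹) * u ^ (-δ-1)
      = Gamma (1-δ) * Gamma (n+δ) / (δ * Gamma n) := by
  have hsum : ∀ u ∈ Ioi (0:ℝ), (1 - ((1+u)^n)⁻¹) * u ^ (-δ-1)
      = ∑ k ∈ Finset.range n, u ^ ((1-δ)-1) * (1+u) ^ (-((1-δ)+((k:ℝ)+δ))) := by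
    intro u hu
    have hu' : (0:ℝ) < u := hu
    have h1u : (0:ℝ) < 1 + u := by linarith
    rw [telescope hu', Finset.sum_mul]
    refine Finset.sum_congr rfl fun k _ => ?_
    have e1 : u * ((1+u)^(k+1))⁻¹ * u ^ (-δ-1) = (u * u ^ (-δ-1)) * ((1+u)^(k+1))⁻¹ := by
      ring
    have e2 : u * u ^ (-δ-1) = u ^ ((1-δ)-1) := by
      nth_rewrite 1 [← Real.rpow_one u]
      rw [← Real.rpow_add hu']
      norm_num
    have e3 : ((1+u)^(k+1))⁻¹ = (1+u) ^ (-((1-δ)+((k:ℝ)+δ))) := by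
      rw [show -((1-δ)+((k:ℝ)+δ)) = -((k:ℝ)+1) from by ring,
        Real.rpow_neg h1u.le]
      norm_cast
    rw [e1, e2, e3]
  rw [setIntegral_congr_fun measurableSet_Ioi hsum,
    integral_finset_sum _ (fun k _ => betaIoi_integrable (by linarith) (by positivity))]
  have : ∀ k ∈ Finset.range n,
      (∫ u in Ioi (0:ℝ), u ^ ((1-δ)-1) * (1+u) ^ (-((1-δ)+((k:ℝ)+δ))))
        = Gamma (1-δ) * Gamma ((k:ℝ)+δ) / Gamma ((k:ℝ)+1) := by
    intro k _
    rw [betaIoi_eq (by linarith) (by positivity)]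
    congr 1
    congr 1
    ring
  rw [Finset.sum_congr rfl this]
  exact gammaSum δ hδ0 n hn

theorem stmt17 (α θ : ℝ) (hα : 2 < α) (hθ : 0 < θ) (n : ℕ) (hn : 1 ≤ n)
    (δ : ℝ) (hδ : δ = 2 / α) :
    2 * π * (∫ t in Set.Ioi (0:ℝ), (1 - ((1 + θ * t ^ (-α)) ^ n)⁻¹) * t)
      = θ ^ δ * ((π ^ 2 * δ / Real.sin (π * δ)) *
          (Real.Gamma (n + δ) / (Real.Gamma n * Real.Gamma (1 + δ)))) ∧
    θ ^ δ * ((π ^ 2 * δ / Real.sin (π * δ)) *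
        (Real.Gamma (n + δ) / (Real.Gamma n * Real.Gamma (1 + δ))))
      = π * θ ^ δ * Real.Gamma (1 - δ) * Real.Gamma (n + δ) / Real.Gamma n := by
  have hα0 : (0:ℝ) < α := by linarith
  have hδ0 : 0 < δ := by rw [hδ]; positivity
  have hδ1 : δ < 1 := by rw [hδ]; rw [div_lt_one hα0]; linarith
  have hαδ : α * δ = 2 := by rw [hδ]; field_simp
  have hΓn : 0 < Real.Gamma (n:ℝ) :=
    Real.Gamma_pos_of_pos (by exact_mod_cast hn)
  have hsin : 0 < Real.sin (π * δ) := by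
    apply Real.sin_pos_of_pos_of_lt_pi
    · positivity
    · nlinarith [Real.pi_pos]
  have hΓδ : 0 < Real.Gamma δ := Real.Gamma_pos_of_pos hδ0
  have hrefl : Real.Gamma δ * Real.Gamma (1 - δ) = π / Real.sin (π * δ) :=
    Real.Gamma_mul_Gamma_one_sub δ
  -- second conjunct
  have hsecond : θ ^ δ * ((π ^ 2 * δ / Real.sin (π * δ)) *
        (Real.Gamma (n + δ) / (Real.Gamma n * Real.Gamma (1 + δ))))
      = π * θ ^ δ * Real.Gamma (1 - δ) * Real.Gamma (n + δ) / Real.Gamma n := by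
    rw [show (1:ℝ) + δ = δ + 1 from add_comm 1 δ, Real.Gamma_add_one hδ0.ne']
    have h2 : π ^ 2 * δ / Real.sin (π * δ) = π * δ * (Real.Gamma δ * Real.Gamma (1-δ)) := by
      rw [hrefl]
      field_simp
    rw [h2]
    field_simp
  refine ⟨?_, hsecond⟩
  rw [hsecond]
  -- the u-integral value
  have hS := uIntegral δ hδ0 hδ1 n hn
  set S := Real.Gamma (1-δ) * Real.Gamma (n+δ) / (δ * Real.Gamma n) with hSdef
  -- step 1 : scaling by θ
  have h10 := MeasureTheory.integral_comp_mul_left_Ioi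
    (fun u => (1 - ((1+u)^n)⁻¹) * u ^ (-δ-1)) 0 hθ
  rw [mul_zero, smul_eq_mul, hS] at h10
  -- h10 : ∫ x in Ioi 0, (1 - ((1+θ*x)^n)⁻¹) * (θ*x)^(-δ-1) = θ⁻¹ * S
  -- step 2 : x ↦ x ^ (-α)
  have h20 := MeasureTheory.integral_comp_rpow_Ioi
    (fun x => (1 - ((1+θ*x)^n)⁻¹) * (θ*x) ^ (-δ-1)) (p := -α) (by linarith : (-α) ≠ 0)
  rw [h10] at h20
  -- step 3 : pointwise identification
  have hpt : ∀ x ∈ Set.Ioi (0:ℝ),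
      (|(-α)| * x ^ ((-α) - 1)) • ((1 - ((1+θ*(x ^ (-α)))^n)⁻¹) * (θ*(x ^ (-α))) ^ (-δ-1))
        = (α * θ ^ (-δ-1)) * ((1 - ((1 + θ * x ^ (-α)) ^ n)⁻¹) * x) := by
    intro x hx
    have hx0 : (0:ℝ) < x := hx
    have e1 : (θ*(x ^ (-α))) ^ (-δ-1) = θ ^ (-δ-1) * (x ^ (-α)) ^ (-δ-1) :=
      Real.mul_rpow hθ.le (Real.rpow_nonneg hx0.le _)
    have e2 : (x ^ (-α)) ^ (-δ-1) = x ^ (2 + α) := by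
      rw [← Real.rpow_mul hx0.le]
      congr 1
      linear_combination hαδ
    have e3 : x ^ ((-α) - 1) * x ^ (2 + α) = x := by
      rw [← Real.rpow_add hx0, show (-α - 1 + (2 + α) : ℝ) = 1 from by ring, Real.rpow_one]
    rw [abs_neg, abs_of_pos hα0, e1, e2, smul_eq_mul]
    calc α * x ^ ((-α) - 1) * ((1 - ((1+θ*(x ^ (-α)))^n)⁻¹) * (θ ^ (-δ-1) * x ^ (2+α)))
        = (α * θ ^ (-δ-1)) * ((1 - ((1+θ*(x ^ (-α)))^n)⁻¹)
            * (x ^ ((-α) - 1) * x ^ (2+α))) := by ring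
      _ = (α * θ ^ (-δ-1)) * ((1 - ((1 + θ * x ^ (-α)) ^ n)⁻¹) * x) := by rw [e3]
  rw [setIntegral_congr_fun measurableSet_Ioi hpt, MeasureTheory.integral_const_mul] at h20
  have hT : θ ^ (-δ-1) = (θ ^ δ * θ)⁻¹ := by
    rw [show (-δ-1 : ℝ) = -(δ+1) from by ring, Real.rpow_neg hθ.le, Real.rpow_add hθ,
      Real.rpow_one]
  rw [hT, hSdef] at h20
  have hTpos : 0 < θ ^ δ := Real.rpow_pos_of_pos hθ δ
  set J := ∫ t in Set.Ioi (0:ℝ), (1 - ((1 + θ * t ^ (-α)) ^ n)⁻¹) * t with hJdef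
  field_simp [hθ.ne', hδ0.ne', hΓn.ne', hTpos.ne'] at h20
  have h21 : ((α * J) * (δ * Real.Gamma n)) * θ
      = (Real.Gamma (1-δ) * Real.Gamma ((n:ℝ)+δ) * θ ^ δ) * θ := by
    linear_combination θ * h20
  have h22 := mul_right_cancel₀ hθ.ne' h21
  rw [eq_div_iff hΓn.ne']
  linear_combination π * h22 - (π * J * Real.Gamma (n:ℝ)) * hαδ
end
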